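/- arXiv:1603.07573 — 2 statements merged into one kernel-verified Lean document; each statement's English description precedes it below -/
import Mathlib

section
/- Let W be a random variable taking values in a measurable space 𝒲, and let Q_b0 : 𝒲 → ℝ be measurable (the true blip function). Suppose the margin condition holds: there exists a constant K ≥ 0 and α > 0 such that P(0 < |Q_b0(W)| ≤ t) ≤ K t^α for all t > 0. Let Q_bn : 𝒲 → ℝ be measurable with ‖Q_bn − Q_b0‖_∞ = ε (essential supremum with respect to the law of W), and define the decision rules d_n(w) = 1{Q_bn(w) > 0} and d_0(w) = 1{Q_b0(w) > 0}. Then the value loss satisfies |E[Q_b0(W)(d_n(W) − d_0(W))]| ≤ ε · P(0 < |Q_b0(W)| ≤ ε) ≤ K ε^{1+α}. -/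
open MeasureTheory

theorem stmt2 {𝒲 : Type*} [MeasurableSpace 𝒲] (P : Measure 𝒲) [IsProbabilityMeasure P]
    (Qb0 Qbn : 𝒲 → ℝ) (hQb0 : Measurable Qb0) (hQbn : Measurable Qbn)
    (hInt : Integrable Qb0 P)
    (K α : ℝ) (hK : 0 ≤ K) (hα : 0 < α)
    (hmargin : ∀ t > 0, P {w | 0 < |Qb0 w| ∧ |Qb0 w| ≤ t} ≤ ENNReal.ofReal (K * t ^ α))
    (ε : ℝ) (hε : 0 < ε)
    (hsup : ∀ᵐ w ∂P, |Qbn w - Qb0 w| ≤ ε) :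
    |∫ w, Qb0 w * ((if 0 < Qbn w then (1:ℝ) else 0) - (if 0 < Qb0 w then (1:ℝ) else 0)) ∂P|
      ≤ ε * (P {w | 0 < |Qb0 w| ∧ |Qb0 w| ≤ ε}).toReal
    ∧ ε * (P {w | 0 < |Qb0 w| ∧ |Qb0 w| ≤ ε}).toReal ≤ K * ε ^ (1 + α) := by
  set S : Set 𝒲 := {w | 0 < |Qb0 w| ∧ |Qb0 w| ≤ ε} with hS
  have hSmeas : MeasurableSet S := by
    apply (measurableSet_lt measurable_const hQb0.abs).inter
    exact measurableSet_le hQb0.abs measurable_const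
  set f : 𝒲 → ℝ := fun w =>
    Qb0 w * ((if 0 < Qbn w then (1:ℝ) else 0) - (if 0 < Qb0 w then (1:ℝ) else 0)) with hf
  have hfmeas : Measurable f := by
    apply hQb0.mul
    apply Measurable.sub
    · exact Measurable.ite (measurableSet_lt measurable_const hQbn) measurable_const
        measurable_const
    · exact Measurable.ite (measurableSet_lt measurable_const hQb0) measurable_const
        measurable_const
  have hfint : Integrable f P := by
    refine hInt.abs.mono' hfmeas.aestronglyMeasurable ?_
    filter_upwards with w
    simp only [hf, Real.norm_eq_abs, abs_mul]
    have h1 : |(if 0 < Qbn w then (1:ℝ) else 0) - (if 0 < Qb0 w then (1:ℝ) else 0)| ≤ 1 := by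
      split_ifs <;> norm_num
    nlinarith [abs_nonneg (Qb0 w)]
  have hbound : ∀ᵐ w ∂P, |f w| ≤ S.indicator (fun _ => ε) w := by
    filter_upwards [hsup] with w hw
    rw [hf]
    by_cases h0 : Qb0 w = 0
    · simp [h0, Set.indicator_apply]
      split_ifs <;> positivity
    · by_cases h1 : 0 < Qbn w <;> by_cases h2 : 0 < Qb0 w <;>
        simp only [h1, h2, if_pos, if_neg, if_true, if_false, sub_self, mul_zero, abs_zero,
          sub_zero, zero_sub, mul_one, mul_neg, abs_neg]
      · exact Set.indicator_nonneg (fun _ _ => le_of_lt hε) w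
      · have hle : |Qb0 w| ≤ ε := by
          rw [abs_of_nonpos (le_of_not_gt h2)]
          have := le_abs_self (Qbn w - Qb0 w)
          linarith
        have hwS : w ∈ S := ⟨abs_pos.2 h0, hle⟩
        rw [Set.indicator_of_mem hwS]
        exact hle
      · have hle : |Qb0 w| ≤ ε := by
          rw [abs_of_pos h2]
          have := neg_le_abs (Qbn w - Qb0 w)
          have h1' := le_of_not_gt h1
          linarith
        have hwS : w ∈ S := ⟨abs_pos.2 h0, hle⟩
        rw [Set.indicator_of_mem hwS]
        exact hle
      · exact Set.indicator_nonneg (fun _ _ => le_of_lt hε) w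
  have hindint : Integrable (S.indicator fun _ => ε) P :=
    (integrable_const ε).indicator hSmeas
  constructor
  · calc |∫ w, f w ∂P| ≤ ∫ w, |f w| ∂P := by simpa [Real.norm_eq_abs] using norm_integral_le_integral_norm (μ := P) f
      _ ≤ ∫ w, S.indicator (fun _ => ε) w ∂P :=
          integral_mono_ae hfint.abs hindint hbound
      _ = ε * (P S).toReal := by
          rw [integral_indicator_const _ hSmeas]; simp [mul_comm, Measure.real]
  · have h1 : (P S).toReal ≤ K * ε ^ α := by
      refine ENNReal.toReal_le_of_le_ofReal ?_ (hmargin ε hε)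
      positivity
    have h2 : ε ^ (1 + α) = ε * ε ^ α := by
      rw [Real.rpow_add hε, Real.rpow_one]
    rw [h2]
    calc ε * (P S).toReal ≤ ε * (K * ε ^ α) := by
          exact mul_le_mul_of_nonneg_left h1 (le_of_lt hε)
      _ = K * (ε * ε ^ α) := by ring
end

section
/- Suppose P₀ is an exceptional law failing condition (*): there is a set S ⊆ 𝒲 with P₀(W ∈ S) > 0 such that Q̄_{b,0}(w) = 0 and max_a Var(Y|A=a,W=w) > 0 for all w ∈ S. Then there exist bounded mean-zero score fluctuations (S_W, S_Y) defining a path P_ε through P₀ such that the one-sided directional derivatives of the optimal value differ: lim_{ε↑0} (Ψ(P_ε) − Ψ(P₀))/ε ≠ lim_{ε↓0} (Ψ(P_ε) − Ψ(P₀))/ε, where Ψ(P) = max_d E_P[Q̄_P(d(W),W)]. Consequently Ψ is not pathwise differentiable at P₀. -/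
open MeasureTheory Filter
open scoped ENNReal NNReal

section Aux

variable {𝒲 : Type*} [MeasurableSpace 𝒲]

private lemma integrable_of_ae_bdd {α : Type*} [MeasurableSpace α] {μ : Measure α}
    [IsFiniteMeasure μ] {f : α → ℝ} (hf : AEStronglyMeasurable f μ) {C : ℝ}
    (h : ∀ᵐ x ∂μ, |f x| ≤ C) : Integrable f μ :=
  (integrable_const C).mono' hf (h.mono fun x hx => by simpa [Real.norm_eq_abs] using hx)

private lemma abs_integral_le_of_ae_bdd {α : Type*} [MeasurableSpace α] {μ : Measure α}
    [IsProbabilityMeasure μ] {f : α → ℝ} {C : ℝ} (h : ∀ᵐ x ∂μ, |f x| ≤ C) :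
    |∫ x, f x ∂μ| ≤ C := by
  have := norm_integral_le_of_norm_le_const (μ := μ) (f := f) (C := C)
    (h.mono fun x hx => by simpa [Real.norm_eq_abs] using hx)
  simpa [Real.norm_eq_abs] using this

/-- clip to `[-M, M]`. -/
private noncomputable def clipR (M y : ℝ) : ℝ := max (-M) (min M y)

private lemma clipR_meas (M : ℝ) : Measurable (clipR M) :=
  measurable_const.max (measurable_const.min measurable_id)

private lemma abs_clipR_le {M : ℝ} (hM : 0 ≤ M) (y : ℝ) : |clipR M y| ≤ M := by
  rw [abs_le, clipR]
  constructor
  · exact le_max_left _ _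
  · exact max_le (by linarith) (min_le_left _ _)

private lemma clipR_eq {M y : ℝ} (h : |y| ≤ M) : clipR M y = y := by
  rw [abs_le] at h
  rw [clipR, min_eq_right h.2, max_eq_right h.1]

end Aux

/-- The optimal value of the fluctuated distribution along the path indexed by `ε`:
the marginal of `W` is fluctuated by the score `SW`, and the conditional distribution
of `Y` given `(A, W)` is fluctuated by the score `SY`; the optimal value is the mean
over `W` of the best of the two treatment-arm conditional mean outcomes. -/
noncomputable def psiPath {𝒲 : Type*} [MeasurableSpace 𝒲] (QW : Measure 𝒲)
    (QY : Bool → 𝒲 → Measure ℝ) (SW : 𝒲 → ℝ) (SY : Bool → 𝒲 → ℝ → ℝ) (ε : ℝ) : ℝ :=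
  ∫ w, max
      (∫ y, y ∂((QY true w).withDensity fun y => ENNReal.ofReal (1 + ε * SY true w y)))
      (∫ y, y ∂((QY false w).withDensity fun y => ENNReal.ofReal (1 + ε * SY false w y)))
    ∂(QW.withDensity fun w => ENNReal.ofReal (1 + ε * SW w))

theorem stmt17 {𝒲 : Type*} [MeasurableSpace 𝒲]
    (QW : Measure 𝒲) [IsProbabilityMeasure QW]
    (QY : Bool → 𝒲 → Measure ℝ)
    (hQYprob : ∀ a w, IsProbabilityMeasure (QY a w))
    (hQYmeas : ∀ a, Measurable fun w => QY a w)
    (M : ℝ) (hM : 0 < M) (hYbdd : ∀ a w, ∀ᵐ y ∂QY a w, |y| ≤ M)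
    (S : Set 𝒲) (hSmeas : MeasurableSet S) (hSpos : 0 < QW S)
    (hzeroblip : ∀ w ∈ S, (∫ y, y ∂QY true w) = ∫ y, y ∂QY false w)
    (hvarpos : ∀ w ∈ S, ∃ a, 0 < ∫ y, (y - ∫ y', y' ∂QY a w) ^ 2 ∂QY a w) :
    ∃ (SW : 𝒲 → ℝ) (SY : Bool → 𝒲 → ℝ → ℝ) (CW CY : ℝ),
      Measurable SW ∧ (∀ w, |SW w| ≤ CW) ∧ (∫ w, SW w ∂QW) = 0 ∧
      (∀ a w, Measurable (SY a w)) ∧ (∀ a w y, |SY a w y| ≤ CY) ∧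
      (∀ a w, (∫ y, SY a w y ∂QY a w) = 0) ∧
      ∃ Lminus Lplus : ℝ, Lminus ≠ Lplus ∧
        Tendsto (fun ε : ℝ =>
            (psiPath QW QY SW SY ε - psiPath QW QY SW SY 0) / ε)
          (nhdsWithin 0 (Set.Iio 0)) (nhds Lminus) ∧
        Tendsto (fun ε : ℝ =>
            (psiPath QW QY SW SY ε - psiPath QW QY SW SY 0) / ε)
          (nhdsWithin 0 (Set.Ioi 0)) (nhds Lplus) := by
  classical
  haveI := hQYprob
  -- conditional means and variances
  let m : Bool → 𝒲 → ℝ := fun a w => ∫ y, y ∂QY a w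
  let V : Bool → 𝒲 → ℝ := fun a w => ∫ y, (y - m a w) ^ 2 ∂QY a w
  have hid_int : ∀ a w, Integrable (fun y : ℝ => y) (QY a w) := fun a w =>
    integrable_of_ae_bdd aestronglyMeasurable_id (hYbdd a w)
  have hm_bdd : ∀ a w, |m a w| ≤ M := fun a w => abs_integral_le_of_ae_bdd (hYbdd a w)
  have hm_meas : ∀ a, Measurable (m a) := by
    intro a
    let κ : ProbabilityTheory.Kernel 𝒲 ℝ := ⟨QY a, hQYmeas a⟩
    haveI : ProbabilityTheory.IsMarkovKernel κ := ⟨hQYprob a⟩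
    exact (MeasureTheory.StronglyMeasurable.integral_kernel_prod_right' (κ := κ)
      (f := fun p : 𝒲 × ℝ => p.2) measurable_snd.stronglyMeasurable).measurable
  have hV_meas : ∀ a, Measurable (V a) := by
    intro a
    let κ : ProbabilityTheory.Kernel 𝒲 ℝ := ⟨QY a, hQYmeas a⟩
    haveI : ProbabilityTheory.IsMarkovKernel κ := ⟨hQYprob a⟩
    exact (MeasureTheory.StronglyMeasurable.integral_kernel_prod_right' (κ := κ)
      (f := fun p : 𝒲 × ℝ => (p.2 - m a p.1) ^ 2)
      ((measurable_snd.sub ((hm_meas a).comp measurable_fst)).pow_const 2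
        ).stronglyMeasurable).measurable
  have hV_nonneg : ∀ a w, 0 ≤ V a w := fun a w =>
    integral_nonneg fun y => sq_nonneg _
  have hdev_bdd : ∀ a w, ∀ᵐ y ∂QY a w, |(y - m a w) ^ 2| ≤ 4 * M ^ 2 := by
    intro a w
    filter_upwards [hYbdd a w] with y hy
    have h1 : |y - m a w| ≤ 2 * M := by
      have := hm_bdd a w
      rw [abs_le] at *
      constructor <;> [linarith [this.1, hy.1]; linarith [this.2, hy.2]]
    rw [abs_of_nonneg (sq_nonneg _)]
    calc (y - m a w) ^ 2 = |y - m a w| ^ 2 := (sq_abs _).symm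
      _ ≤ (2 * M) ^ 2 := by
          apply pow_le_pow_left₀ (abs_nonneg _) h1
      _ = 4 * M ^ 2 := by ring
  have hV_bdd : ∀ a w, |V a w| ≤ 4 * M ^ 2 := fun a w =>
    abs_integral_le_of_ae_bdd (hdev_bdd a w)
  have hV_int : ∀ a, Integrable (V a) QW := fun a =>
    integrable_of_ae_bdd (hV_meas a).aestronglyMeasurable
      (Eventually.of_forall fun w => hV_bdd a w)
  -- the scores
  set SY : Bool → 𝒲 → ℝ → ℝ := fun a w y =>
    if w ∈ S then (if a then clipR M y - m true w else m false w - clipR M y) else 0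
    with hSY_def
  set c : Bool → 𝒲 → ℝ := fun a w =>
    if w ∈ S then (if a then V true w else -V false w) else 0 with hc_def
  have hSYt : ∀ w ∈ S, ∀ y, SY true w y = clipR M y - m true w := by
    intro w hw y; simp [hSY_def, hw]
  have hSYf : ∀ w ∈ S, ∀ y, SY false w y = m false w - clipR M y := by
    intro w hw y; simp [hSY_def, hw]
  have hSY0 : ∀ a w, w ∉ S → ∀ y, SY a w y = 0 := by
    intro a w hw y; simp [hSY_def, hw]
  have hct : ∀ w ∈ S, c true w = V true w := by intro w hw; simp [hc_def, hw]
  have hcf : ∀ w ∈ S, c false w = -V false w := by intro w hw; simp [hc_def, hw]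
  have hc0 : ∀ a w, w ∉ S → c a w = 0 := by intro a w hw; simp [hc_def, hw]
  have hSY_meas : ∀ a w, Measurable (SY a w) := by
    intro a w
    by_cases hw : w ∈ S
    · cases a
      · rw [show SY false w = fun y => m false w - clipR M y from
          funext fun y => hSYf w hw y]
        exact measurable_const.sub (clipR_meas M)
      · rw [show SY true w = fun y => clipR M y - m true w from
          funext fun y => hSYt w hw y]
        exact (clipR_meas M).sub measurable_const
    · rw [show SY a w = fun _ => 0 from funext fun y => hSY0 a w hw y]
      exact measurable_const
  have hSY_bdd : ∀ a w y, |SY a w y| ≤ 2 * M := by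
    intro a w y
    have h1 := abs_clipR_le hM.le y
    by_cases hw : w ∈ S
    · cases a
      · rw [hSYf w hw y]
        have := hm_bdd false w
        calc |m false w - clipR M y| ≤ |m false w| + |clipR M y| := abs_sub _ _
          _ ≤ 2 * M := by linarith
      · rw [hSYt w hw y]
        have := hm_bdd true w
        calc |clipR M y - m true w| ≤ |clipR M y| + |m true w| := abs_sub _ _
          _ ≤ 2 * M := by linarith
    · rw [hSY0 a w hw y]
      simp only [abs_zero]
      linarith
  have hclip_ae : ∀ a w, (fun y => clipR M y) =ᵐ[QY a w] fun y => y := by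
    intro a w
    filter_upwards [hYbdd a w] with y hy using clipR_eq hy
  have hclip_int : ∀ a w, ∫ y, clipR M y ∂QY a w = m a w := fun a w =>
    integral_congr_ae (hclip_ae a w)
  have hSY_mean : ∀ a w, (∫ y, SY a w y ∂QY a w) = 0 := by
    intro a w
    by_cases hw : w ∈ S
    · cases a
      · simp only [hSYf w hw]
        rw [integral_sub (integrable_const _)
          (integrable_of_ae_bdd (clipR_meas M).aestronglyMeasurable
            (Eventually.of_forall fun y => abs_clipR_le hM.le y)),
          hclip_int, integral_const]
        simp
      · simp only [hSYt w hw]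
        rw [integral_sub
          (integrable_of_ae_bdd (clipR_meas M).aestronglyMeasurable
            (Eventually.of_forall fun y => abs_clipR_le hM.le y)) (integrable_const _),
          hclip_int, integral_const]
        simp
    · simp only [hSY0 a w hw, integral_zero]
  -- centered first moment is zero
  have hcent : ∀ a w, ∫ y, (y - m a w) ∂QY a w = 0 := by
    intro a w
    rw [integral_sub (hid_int a w) (integrable_const _), integral_const]
    simp [m]
  -- second moment identity
  have hmom : ∀ a w, ∫ y, (y - m a w) * y ∂QY a w = V a w := by
    intro a w
    have hint1 : Integrable (fun y => (y - m a w) ^ 2) (QY a w) :=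
      integrable_of_ae_bdd ((measurable_id.sub measurable_const).pow_const 2
        ).aestronglyMeasurable (hdev_bdd a w)
    have hint2 : Integrable (fun y => m a w * (y - m a w)) (QY a w) :=
      (Integrable.sub (hid_int a w) (integrable_const _)).const_mul _
    have : (fun y => (y - m a w) * y) = fun y => (y - m a w) ^ 2 + m a w * (y - m a w) := by
      funext y; ring
    rw [this, integral_add hint1 hint2, integral_const_mul, hcent, mul_zero, add_zero]
  -- key cross-moment computation
  have hSYint : ∀ a w, ∫ y, SY a w y * y ∂QY a w = c a w := by
    intro a w
    by_cases hw : w ∈ S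
    · cases a
      · simp only [hSYf w hw, hcf w hw]
        have : (fun y => (m false w - clipR M y) * y) =ᵐ[QY false w]
            fun y => -((y - m false w) * y) := by
          filter_upwards [hYbdd false w] with y hy
          rw [clipR_eq hy]; ring
        rw [integral_congr_ae this, integral_neg, hmom]
      · simp only [hSYt w hw, hct w hw]
        have : (fun y => (clipR M y - m true w) * y) =ᵐ[QY true w]
            fun y => (y - m true w) * y := by
          filter_upwards [hYbdd true w] with y hy
          rw [clipR_eq hy]
        rw [integral_congr_ae this, hmom]
    · simp only [hSY0 a w hw, hc0 a w hw, zero_mul, integral_zero]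
  -- inner integral along the path
  have innerEq : ∀ (a : Bool) w (ε : ℝ), |ε| ≤ (2 * M)⁻¹ →
      ∫ y, y ∂((QY a w).withDensity fun y => ENNReal.ofReal (1 + ε * SY a w y)) =
        m a w + ε * c a w := by
    intro a w ε hε
    have h1 : ∀ y, 0 ≤ 1 + ε * SY a w y := by
      intro y
      have h2 : |ε * SY a w y| ≤ 1 := by
        rw [abs_mul]
        calc |ε| * |SY a w y| ≤ (2 * M)⁻¹ * (2 * M) :=
          mul_le_mul hε (hSY_bdd a w y) (abs_nonneg _) (by positivity)
        _ = 1 := by field_simp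
      have := (abs_le.mp h2).1
      linarith
    have hg : Measurable fun y => (1 + ε * SY a w y).toNNReal :=
      (measurable_const.add ((hSY_meas a w).const_mul ε)).real_toNNReal
    rw [show (fun y => ENNReal.ofReal (1 + ε * SY a w y)) =
        fun y => ((1 + ε * SY a w y).toNNReal : ℝ≥0∞) from rfl,
      integral_withDensity_eq_integral_smul hg]
    have : (fun y => ((1 + ε * SY a w y).toNNReal : ℝ≥0) • y) =
        fun y => y + ε * (SY a w y * y) := by
      funext y
      rw [NNReal.smul_def, Real.coe_toNNReal _ (h1 y), smul_eq_mul]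
      ring
    rw [this, integral_add (f := fun y => y) (g := fun y => ε * (SY a w y * y)) (hid_int a w)
      (((integrable_of_ae_bdd ((hSY_meas a w).mul measurable_id').aestronglyMeasurable
        (by filter_upwards [hYbdd a w] with y hy
            rw [abs_mul]
            exact mul_le_mul (hSY_bdd a w y) hy (abs_nonneg _) (by positivity)
          : ∀ᵐ y ∂QY a w, |SY a w y * y| ≤ 2 * M * M))).const_mul ε),
      integral_const_mul, hSYint]
  -- the path value
  have psiEq : ∀ ε : ℝ, |ε| ≤ (2 * M)⁻¹ →
      psiPath QW QY (fun _ => 0) SY ε =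
        ∫ w, max (m true w + ε * c true w) (m false w + ε * c false w) ∂QW := by
    intro ε hε
    rw [psiPath, show (fun w : 𝒲 => ENNReal.ofReal (1 + ε * (fun _ : 𝒲 => (0:ℝ)) w)) =
        (1 : 𝒲 → ℝ≥0∞) from by funext w; simp, withDensity_one]
    refine integral_congr_ae (Eventually.of_forall fun w => ?_)
    simp only [innerEq true w ε hε, innerEq false w ε hε]
  -- integrability on the W side
  have hmax_int : Integrable (fun w => max (m true w) (m false w)) QW :=
    integrable_of_ae_bdd ((hm_meas true).max (hm_meas false)).aestronglyMeasurable
      (Eventually.of_forall fun w => abs_max_le_max_abs_abs.trans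
        (max_le (hm_bdd true w) (hm_bdd false w)))
  have hind_int : ∀ a, Integrable (S.indicator (V a)) QW := fun a =>
    (hV_int a).indicator hSmeas
  -- explicit formulas for the two signs
  have maxPos : ∀ (ε : ℝ), 0 ≤ ε → ∀ w,
      max (m true w + ε * c true w) (m false w + ε * c false w) =
        max (m true w) (m false w) + ε * S.indicator (V true) w := by
    intro ε hε w
    by_cases hw : w ∈ S
    · have hb : m false w = m true w := (hzeroblip w hw).symm
      rw [hct w hw, hcf w hw, Set.indicator_of_mem hw, hb,
        max_eq_left (by nlinarith [hV_nonneg true w, hV_nonneg false w]), max_self]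
    · rw [hc0 true w hw, hc0 false w hw, Set.indicator_of_notMem hw]
      ring_nf
  have maxNeg : ∀ (ε : ℝ), ε ≤ 0 → ∀ w,
      max (m true w + ε * c true w) (m false w + ε * c false w) =
        max (m true w) (m false w) + ε * S.indicator (fun w => -V false w) w := by
    intro ε hε w
    by_cases hw : w ∈ S
    · have hb : m false w = m true w := (hzeroblip w hw).symm
      rw [hct w hw, hcf w hw, Set.indicator_of_mem hw, hb,
        max_eq_right (by nlinarith [hV_nonneg true w, hV_nonneg false w]), max_self]
    · rw [hc0 true w hw, hc0 false w hw, Set.indicator_of_notMem hw]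
      ring_nf
  have psiPos : ∀ ε : ℝ, 0 ≤ ε → |ε| ≤ (2 * M)⁻¹ →
      psiPath QW QY (fun _ => 0) SY ε =
        (∫ w, max (m true w) (m false w) ∂QW) + ε * ∫ w in S, V true w ∂QW := by
    intro ε hε0 hε
    rw [psiEq ε hε, integral_congr_ae (Eventually.of_forall fun w => maxPos ε hε0 w),
      integral_add hmax_int (((hind_int true)).const_mul ε), integral_const_mul,
      integral_indicator hSmeas]
  have psiNeg : ∀ ε : ℝ, ε ≤ 0 → |ε| ≤ (2 * M)⁻¹ →
      psiPath QW QY (fun _ => 0) SY ε =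
        (∫ w, max (m true w) (m false w) ∂QW) + ε * -∫ w in S, V false w ∂QW := by
    intro ε hε0 hε
    have : Integrable (S.indicator fun w => -V false w) QW :=
      ((hV_int false).neg).indicator hSmeas
    rw [psiEq ε hε, integral_congr_ae (Eventually.of_forall fun w => maxNeg ε hε0 w),
      integral_add hmax_int (this.const_mul ε), integral_const_mul,
      integral_indicator hSmeas, integral_neg]
  have h2M : (0:ℝ) < (2 * M)⁻¹ := by positivity
  have psi0 : psiPath QW QY (fun _ => 0) SY 0 = ∫ w, max (m true w) (m false w) ∂QW := by
    rw [psiPos 0 le_rfl (by simpa using h2M.le)]; ring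
  -- conclusion
  refine ⟨fun _ => 0, SY, 0, 2 * M, measurable_const, fun w => by simp,
    by simp, hSY_meas, hSY_bdd, hSY_mean,
    -∫ w in S, V false w ∂QW, ∫ w in S, V true w ∂QW, ?_, ?_, ?_⟩
  · -- Lminus ≠ Lplus
    have hsum : 0 < ∫ w in S, (V true w + V false w) ∂QW := by
      rw [setIntegral_pos_iff_support_of_nonneg_ae
        (Eventually.of_forall fun w => add_nonneg (hV_nonneg true w) (hV_nonneg false w))
        (((hV_int true).add (hV_int false)).integrableOn)]
      refine lt_of_lt_of_le hSpos (measure_mono fun w hw => ?_)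
      obtain ⟨a, ha⟩ := hvarpos w hw
      have ha' : 0 < V a w := ha
      have hpos : 0 < V true w + V false w := by
        cases a
        · have h1 := hV_nonneg true w
          have h2 : 0 < V false w := ha'
          linarith
        · have h1 := hV_nonneg false w
          have h2 : 0 < V true w := ha'
          linarith
      exact ⟨Function.mem_support.mpr hpos.ne', hw⟩
    have hsplit : ∫ w in S, (V true w + V false w) ∂QW =
        (∫ w in S, V true w ∂QW) + ∫ w in S, V false w ∂QW :=
      integral_add ((hV_int true).integrableOn) ((hV_int false).integrableOn)
    intro habs
    rw [hsplit] at hsum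
    have : -∫ w in S, V false w ∂QW = ∫ w in S, V true w ∂QW := habs
    linarith
  · -- left limit
    refine Tendsto.congr' ?_ tendsto_const_nhds
    filter_upwards [Ioo_mem_nhdsLT (show -(2*M)⁻¹ < (0:ℝ) by linarith)] with ε hε
    obtain ⟨hεgt, hεlt⟩ := hε
    have hεne : ε ≠ 0 := ne_of_lt hεlt
    rw [psiNeg ε hεlt.le (by rw [abs_le]; constructor <;> linarith), psi0,
      add_sub_cancel_left, mul_div_cancel_left₀ _ hεne]
  · -- right limit
    refine Tendsto.congr' ?_ tendsto_const_nhds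
    filter_upwards [Ioo_mem_nhdsGT h2M] with ε hε
    obtain ⟨hεgt, hεlt⟩ := hε
    have hεne : ε ≠ 0 := ne_of_gt hεgt
    rw [psiPos ε hεgt.le (by rw [abs_le]; constructor <;> linarith), psi0,
      add_sub_cancel_left, mul_div_cancel_left₀ _ hεne]
end
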